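/- Let m ≥ 1 be an integer and let ζ : ℝ^d → ℝ^d be m-times continuously differentiable with λ := inf_{θ∈[0,1]} inf_{x∈ℝ^d} |det(I + θ Dζ(x))| > 0 and M_m := max_{0≤k≤m} sup_{x∈ℝ^d} |D^k ζ(x)| < ∞, and let τ(x) = x + ζ(x), which is a C^m-diffeomorphism of ℝ^d. Define ζ*(x) = −x + τ^{-1}(x) for x ∈ ℝ^d. Then ζ* is m-times continuously differentiable, sup_{ℝ^d} |ζ*| = sup_{ℝ^d} |ζ|, sup_{ℝ^d} |D^k ζ*| ≤ M*_m · max_{1≤j≤k} sup_{ℝ^d} |D^j ζ| for k = 1,…,m with a constant M*_m = M*_m(d, λ, M_m), and inf_{θ∈[0,1]} inf_{ℝ^d} |det(I + θ Dζ*)| ≥ λ' · inf_{θ∈[0,1]} inf_{ℝ^d} |det(I + θ Dζ)|, where λ' > 0 is a constant depending only on d, λ and M_1. -/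

import Mathlib

open MeasureTheory Real

noncomputable section

/-- `ℝ^d` with the Euclidean norm. -/
abbrev Rd (d : ℕ) : Type := EuclideanSpace ℝ (Fin d)

abbrev bas (d : ℕ) : Module.Basis (Fin d) ℝ (Rd d) := (EuclideanSpace.basisFun (Fin d) ℝ).toBasis

variable {d : ℕ}

lemma abs_coord_le_norm (x : Rd d) (i : Fin d) : |x i| ≤ ‖x‖ := by
  have := norm_inner_le_norm (𝕜 := ℝ) (EuclideanSpace.single i (1:ℝ)) x
  simpa [EuclideanSpace.inner_single_left, EuclideanSpace.norm_single] using this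

lemma norm_le_sum_abs (x : Rd d) : ‖x‖ ≤ ∑ i, |x i| := by
  conv_lhs => rw [← (EuclideanSpace.basisFun (Fin d) ℝ).toBasis.sum_repr x]
  refine (norm_sum_le _ _).trans ?_
  refine Finset.sum_le_sum fun i _ => ?_
  simp [EuclideanSpace.basisFun_repr, EuclideanSpace.basisFun_apply, norm_smul,
    EuclideanSpace.norm_single]

/-- operator norm from entrywise bounds -/
lemma opNorm_le_entries {T : Rd d →L[ℝ] Rd d} {a : ℝ} (ha : 0 ≤ a)
    (h : ∀ i j, |T (bas d j) i| ≤ a) : ‖T‖ ≤ (d:ℝ)^2 * a := by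
  refine ContinuousLinearMap.opNorm_le_bound _ (by positivity) fun x => ?_
  have hx : T x = ∑ j, x j • T (bas d j) := by
    conv_lhs => rw [← (bas d).sum_repr x]
    rw [map_sum]
    simp [EuclideanSpace.basisFun_repr]
  rw [hx]
  calc ‖∑ j, x j • T (bas d j)‖ ≤ ∑ j, ‖x j • T (bas d j)‖ := norm_sum_le _ _
    _ ≤ ∑ _j : Fin d, ‖x‖ * ((d:ℝ) * a) := by
        refine Finset.sum_le_sum fun j _ => ?_
        rw [norm_smul, Real.norm_eq_abs]
        have h1 : ‖T (bas d j)‖ ≤ (d:ℝ) * a := by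
          refine (norm_le_sum_abs _).trans ?_
          calc ∑ i, |T (bas d j) i| ≤ ∑ _i : Fin d, a := Finset.sum_le_sum fun i _ => h i j
            _ = (d:ℝ) * a := by simp [mul_comm]
        exact mul_le_mul (abs_coord_le_norm x j) h1 (norm_nonneg _) (norm_nonneg _)
    _ = (d:ℝ)^2 * a * ‖x‖ := by simp [Finset.sum_const]; ring

lemma mat_entry (T : Rd d →L[ℝ] Rd d) (i j : Fin d) :
    LinearMap.toMatrix (bas d) (bas d) (T : Rd d →ₗ[ℝ] Rd d) i j = T (bas d j) i := by
  rw [LinearMap.toMatrix_apply]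
  exact (EuclideanSpace.basisFun (Fin d) ℝ).coe_toBasis_repr_apply _ _

lemma clm_det_eq (T : Rd d →L[ℝ] Rd d) :
    T.det = (LinearMap.toMatrix (bas d) (bas d) (T : Rd d →ₗ[ℝ] Rd d)).det :=
  (LinearMap.det_toMatrix _ _).symm

lemma abs_det_le_of_entries {T : Rd d →L[ℝ] Rd d} {a : ℝ}
    (h : ∀ i j, |T (bas d j) i| ≤ a) : |T.det| ≤ (d.factorial : ℝ) * a ^ d := by
  rw [clm_det_eq]
  have := Matrix.det_le (A := LinearMap.toMatrix (bas d) (bas d) (T : Rd d →ₗ[ℝ] Rd d))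
    (abv := AbsoluteValue.abs) (x := a) (fun i j => by rw [mat_entry]; exact h i j)
  simpa [nsmul_eq_mul] using this

lemma symm_norm_le {T : Rd d ≃L[ℝ] Rd d} {a lam : ℝ} (ha : 0 ≤ a) (hlam : 0 < lam)
    (hdet : lam ≤ |(T : Rd d →L[ℝ] Rd d).det|)
    (h : ∀ i j, |(T : Rd d →L[ℝ] Rd d) (bas d j) i| ≤ a) :
    ‖(T.symm : Rd d →L[ℝ] Rd d)‖ ≤ (d:ℝ)^2 * (lam⁻¹ * d.factorial * max a 1 ^ d) := by
  set A := LinearMap.toMatrix (bas d) (bas d) ((T : Rd d →L[ℝ] Rd d) : Rd d →ₗ[ℝ] Rd d) with hA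
  set B := LinearMap.toMatrix (bas d) (bas d)
    ((T.symm : Rd d →L[ℝ] Rd d) : Rd d →ₗ[ℝ] Rd d) with hB
  have hBA : B * A = 1 := by
    rw [hA, hB, ← LinearMap.toMatrix_comp]
    have : ((T.symm : Rd d →L[ℝ] Rd d) : Rd d →ₗ[ℝ] Rd d).comp
        ((T : Rd d →L[ℝ] Rd d) : Rd d →ₗ[ℝ] Rd d) = LinearMap.id := by
      ext x; simp
    rw [this, LinearMap.toMatrix_id]
  have hinv : A⁻¹ = B := Matrix.inv_eq_left_inv hBA
  have hdetA : lam ≤ |A.det| := by rw [clm_det_eq] at hdet; exact hdet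
  have hdetA0 : A.det ≠ 0 := by
    intro h0; rw [h0] at hdetA; simp at hdetA; linarith
  have hadj : ∀ i j, |A.adjugate i j| ≤ (d.factorial : ℝ) * max a 1 ^ d := by
    intro i j
    rw [Matrix.adjugate_apply]
    have := Matrix.det_le (A := A.updateRow j (Pi.single i 1))
      (abv := AbsoluteValue.abs) (x := max a 1) ?ent
    · simpa [nsmul_eq_mul] using this
    case ent =>
      intro i' j'
      rw [Matrix.updateRow_apply]
      rcases eq_or_ne i' j with rfl | hne
      · simp only [if_pos rfl]
        rcases eq_or_ne j' i with rfl | hji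
        · simp [Pi.single_apply]
        · simp [Pi.single_apply, hji]
      · simp only [if_neg hne]
        rw [hA, mat_entry]
        exact (h i' j').trans (le_max_left _ _)
  have hBij : ∀ i j, |B i j| ≤ lam⁻¹ * ((d.factorial : ℝ) * max a 1 ^ d) := by
    intro i j
    rw [← hinv, Matrix.inv_def, Ring.inverse_eq_inv]
    simp only [Matrix.smul_apply, smul_eq_mul, abs_mul, abs_inv]
    have h1 : |A.det|⁻¹ ≤ lam⁻¹ := by
      apply inv_anti₀ hlam hdetA
    exact mul_le_mul h1 (hadj i j) (abs_nonneg _) (by positivity)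
  have := opNorm_le_entries (T := (T.symm : Rd d →L[ℝ] Rd d))
    (a := lam⁻¹ * ((d.factorial : ℝ) * max a 1 ^ d)) (by positivity) ?_
  · calc ‖(T.symm : Rd d →L[ℝ] Rd d)‖ ≤ (d:ℝ)^2 * (lam⁻¹ * ((d.factorial:ℝ) * max a 1 ^ d)) :=
        this
      _ = (d:ℝ)^2 * (lam⁻¹ * (d.factorial:ℝ) * max a 1 ^ d) := by ring
  · intro i j
    rw [← mat_entry, ← hB]
    exact hBij i j

open Function

lemma strictMono_fin_eq_id {k : ℕ} {f : Fin k → Fin k} (hf : StrictMono f) : f = id := by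
  refine (hf.range_inj strictMono_id).1 ?_
  have hsurj : Function.Surjective f :=
    Finite.surjective_of_injective hf.injective
  simp [Set.range_eq_univ.mpr hsurj, Set.range_id]

namespace OrderedFinpartition

/-- the one-block ordered finpartition -/
def single (k : ℕ) (hk : 0 < k) : OrderedFinpartition k where
  length := 1
  partSize _ := k
  partSize_pos _ := hk
  emb _ := id
  emb_strictMono _ := strictMono_id
  parts_strictMono := Subsingleton.strictMono _
  disjoint := by
    intro i _ j _ hij
    exact absurd (Subsingleton.elim i j) hij
  cover x := ⟨0, ⟨x, rfl⟩⟩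

lemma sum_partSize {k : ℕ} (c : OrderedFinpartition k) : ∑ i, c.partSize i = k := by
  have := Fintype.card_congr c.equivSigma
  simpa [Fintype.card_sigma] using this

lemma eq_single_of_partSize_eq {k : ℕ} (hk : 0 < k) (c : OrderedFinpartition k)
    {i : Fin c.length} (hi : c.partSize i = k) : c = single k hk := by
  have hlen : c.length = 1 := by
    by_contra hne
    have h2 : 2 ≤ c.length := by
      have hpos : 0 < c.length := c.length_pos hk
      omega
    -- there is another index j ≠ i with partSize ≥ 1, contradicting the sum
    have hsum := c.sum_partSize
    have : k + 1 ≤ ∑ j, c.partSize j := by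
      obtain ⟨j, hji⟩ : ∃ j : Fin c.length, j ≠ i := by
        refine ⟨⟨if (i:ℕ) = 0 then 1 else 0, ?_⟩, ?_⟩
        · split <;> omega
        · intro hji; rw [Fin.ext_iff] at hji; simp at hji; split at hji <;> omega
      calc k + 1 = c.partSize i + 1 := by rw [hi]
        _ ≤ c.partSize i + c.partSize j := by
            have := c.partSize_pos j; omega
        _ = ∑ x ∈ {i, j}, c.partSize x := by rw [Finset.sum_pair (Ne.symm hji)]
        _ ≤ ∑ x, c.partSize x := Finset.sum_le_sum_of_subset (Finset.subset_univ _)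
    omega
  obtain ⟨len, ps, pos, emb, hmono, hpm, hdisj, hcover⟩ := c
  simp only at hlen
  subst hlen
  have hi' : i = 0 := Subsingleton.elim _ _
  subst hi'
  have hps : ps = fun _ => k := by
    funext j
    have : j = (0 : Fin 1) := Subsingleton.elim _ _
    rw [this]; exact hi
  subst hps
  have hemb : emb = fun _ => id := by
    funext j
    have : j = (0 : Fin 1) := Subsingleton.elim _ _
    subst this
    exact strictMono_fin_eq_id (hmono _)
  subst hemb
  rfl

end OrderedFinpartition

section general

variable {E F G : Type*} [NormedAddCommGroup E] [NormedSpace ℝ E]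
  [NormedAddCommGroup F] [NormedSpace ℝ F] [NormedAddCommGroup G] [NormedSpace ℝ G]

theorem iteratedFDeriv_comp_sum {g : F → G} {f : E → F} {n : ℕ∞}
    (hg : ContDiff ℝ n g) (hf : ContDiff ℝ n f) {k : ℕ} (hk : (k:ℕ∞) ≤ n) (x : E) :
    iteratedFDeriv ℝ k (g ∘ f) x = ∑ c : OrderedFinpartition k,
      (ftaylorSeries ℝ g (f x)).compAlongOrderedFinpartition (ftaylorSeries ℝ f x) c := by
  have hg' := contDiff_iff_ftaylorSeries.1 hg
  have hf' := contDiff_iff_ftaylorSeries.1 hf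
  rw [← hasFTaylorSeriesUpToOn_univ_iff] at hg' hf'
  have hcomp := hg'.comp hf' (Set.mapsTo_univ f Set.univ)
  have h2 := hcomp.eq_iteratedFDerivWithin_of_uniqueDiffOn (m := k) (by exact_mod_cast hk)
    uniqueDiffOn_univ (Set.mem_univ x)
  rw [iteratedFDerivWithin_univ] at h2
  rw [← h2]
  rfl

theorem norm_compAlong_le {k : ℕ} (c : OrderedFinpartition k)
    (f : ContinuousMultilinearMap ℝ (fun _i : Fin c.length ↦ F) G)
    (p : ∀ i : Fin c.length, ContinuousMultilinearMap ℝ (fun _ : Fin (c.partSize i) => E) F) :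
    ‖c.compAlongOrderedFinpartition f p‖ ≤ ‖f‖ * ∏ i, ‖p i‖ := by
  apply ContinuousMultilinearMap.opNorm_le_bound (by positivity) (fun v => ?_)
  simp only [OrderedFinpartition.compAlongOrderFinpartition_apply]
  apply (f.le_opNorm _).trans
  rw [mul_assoc, ← c.prod_sigma_eq_prod, ← Finset.prod_mul_distrib]
  gcongr with m _
  rw [OrderedFinpartition.applyOrderedFinpartition_apply]
  exact (p m).le_opNorm _

lemma iteratedFDeriv_id_zero {j : ℕ} (hj : 2 ≤ j) (x : E) :
    iteratedFDeriv ℝ j (fun y : E => y) x = 0 := by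
  obtain ⟨i, rfl⟩ : ∃ i, j = i + 1 := ⟨j - 1, by omega⟩
  rw [iteratedFDeriv_succ_eq_comp_right]
  have h1 : (fun y : E => fderiv ℝ (fun x : E => x) y)
      = fun _ : E => ContinuousLinearMap.id ℝ E := by
    funext y; exact fderiv_id'
  simp only [comp_apply, h1]
  rw [iteratedFDeriv_const_of_ne (by omega)]
  simp

end general

variable {d m : ℕ}

/-- the continuous linear equivalence `I + Dζ(y)` -/
def Tmap {ζ : Rd d → Rd d} (y : Rd d)
    (hdet : (ContinuousLinearMap.id ℝ (Rd d) + fderiv ℝ ζ y).det ≠ 0) : Rd d ≃L[ℝ] Rd d :=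
  (ContinuousLinearMap.id ℝ (Rd d) + fderiv ℝ ζ y).toContinuousLinearEquivOfDetNeZero hdet

lemma Tmap_coe {ζ : Rd d → Rd d} (y : Rd d)
    (hdet : (ContinuousLinearMap.id ℝ (Rd d) + fderiv ℝ ζ y).det ≠ 0) :
    (Tmap y hdet : Rd d →L[ℝ] Rd d) = ContinuousLinearMap.id ℝ (Rd d) + fderiv ℝ ζ y := by
  simp [Tmap]

lemma iota_smooth {ζ ι : Rd d → Rd d} (hm : 1 ≤ m) (hζ : ContDiff ℝ (m:ℕ∞) ζ)
    (hdet : ∀ y, (ContinuousLinearMap.id ℝ (Rd d) + fderiv ℝ ζ y).det ≠ 0)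
    (hleft : Function.LeftInverse ι (fun x => x + ζ x))
    (hright : Function.RightInverse ι (fun x => x + ζ x)) (x : Rd d) :
    ContDiffAt ℝ (m:ℕ∞) ι x ∧
      HasFDerivAt ι ((Tmap (ι x) (hdet (ι x))).symm : Rd d →L[ℝ] Rd d) x := by
  have hm' : ((m:ℕ∞) : WithTop ℕ∞) ≠ 0 := by
    exact_mod_cast (show m ≠ 0 by omega)
  set τ : Rd d → Rd d := fun y => y + ζ y with hτ
  have hτc : ContDiff ℝ (m:ℕ∞) τ := contDiff_id.add hζ
  set a := ι x with ha
  have hτa : τ a = x := hright x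
  have hdiff : DifferentiableAt ℝ ζ a := (hζ.differentiable hm').differentiableAt
  have hDτ : HasFDerivAt τ ((Tmap a (hdet a) : Rd d →L[ℝ] Rd d)) a := by
    rw [Tmap_coe]
    exact (hasFDerivAt_id a).add hdiff.hasFDerivAt
  have hca : ContDiffAt ℝ (m:ℕ∞) τ a := hτc.contDiffAt
  have hstrict := hca.hasStrictFDerivAt' (f' := Tmap a (hdet a)) hDτ hm'
  have hloc : ContDiffAt ℝ (m:ℕ∞) (hca.localInverse hDτ hm') x := by
    have := hca.to_localInverse (f' := Tmap a (hdet a)) hDτ hm'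
    rwa [hτa] at this
  have hev : ∀ᶠ z in nhds x, τ ((hca.localInverse hDτ hm') z) = z := by
    have := hstrict.eventually_right_inverse
    rwa [hτa] at this
  have hee : ι =ᶠ[nhds x] (hca.localInverse hDτ hm') := by
    filter_upwards [hev] with z hz
    conv_lhs => rw [← hz]
    exact hleft _
  constructor
  · exact hloc.congr_of_eventuallyEq hee
  · have hfd : HasFDerivAt (hca.localInverse hDτ hm')
        ((Tmap a (hdet a)).symm : Rd d →L[ℝ] Rd d) x := by
      have := hstrict.to_localInverse.hasFDerivAt
      rwa [hτa] at this
    exact hfd.congr_of_eventuallyEq hee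

lemma norm_fderiv_eq_iteratedFDeriv {E F : Type*} [NormedAddCommGroup E] [NormedSpace ℝ E]
    [NormedAddCommGroup F] [NormedSpace ℝ F] (f : E → F) (x : E) :
    ‖fderiv ℝ f x‖ = ‖iteratedFDeriv ℝ 1 f x‖ := by
  rw [← norm_iteratedFDeriv_fderiv (n := 0), norm_iteratedFDeriv_zero]

/-- the inverse-norm constant -/
def B0 (d : ℕ) (lam M1 : ℝ) : ℝ :=
  (d:ℝ)^2 * (lam⁻¹ * (d.factorial : ℝ) * max (1 + max M1 0) 1 ^ d)

lemma B0_nonneg {d : ℕ} {lam M1 : ℝ} (hlam : 0 < lam) : 0 ≤ B0 d lam M1 := by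
  unfold B0; positivity

lemma hdet_ne {d : ℕ} {ζ : Rd d → Rd d} {lam : ℝ} (hlam : 0 < lam)
    (hdet : ∀ θ ∈ Set.Icc (0:ℝ) 1, ∀ x : Rd d,
      lam ≤ |(ContinuousLinearMap.id ℝ (Rd d) + θ • fderiv ℝ ζ x).det|) (y : Rd d) :
    (ContinuousLinearMap.id ℝ (Rd d) + fderiv ℝ ζ y).det ≠ 0 := by
  have h := hdet 1 (by norm_num) y
  rw [one_smul] at h
  intro h0
  rw [h0] at h
  simp at h
  linarith

lemma symm_norm_le_B0 {d m : ℕ} {ζ : Rd d → Rd d} {lam M1 : ℝ} (hm : 1 ≤ m)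
    (hlam : 0 < lam) (hζ : ContDiff ℝ (m:ℕ∞) ζ)
    (hdet : ∀ θ ∈ Set.Icc (0:ℝ) 1, ∀ x : Rd d,
      lam ≤ |(ContinuousLinearMap.id ℝ (Rd d) + θ • fderiv ℝ ζ x).det|)
    (hM1 : ∀ k ≤ 1, ∀ x : Rd d, ‖iteratedFDeriv ℝ k ζ x‖ ≤ M1) (y : Rd d) :
    ‖((Tmap y (hdet_ne hlam hdet y)).symm : Rd d →L[ℝ] Rd d)‖ ≤ B0 d lam M1 := by
  set a : ℝ := 1 + max M1 0 with ha
  have ha0 : 0 ≤ a := by positivity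
  have hTnorm : ‖(Tmap y (hdet_ne hlam hdet y) : Rd d →L[ℝ] Rd d)‖ ≤ a := by
    rw [Tmap_coe]
    refine (norm_add_le _ _).trans ?_
    have h1 : ‖ContinuousLinearMap.id ℝ (Rd d)‖ ≤ 1 := ContinuousLinearMap.norm_id_le
    have h2 : ‖fderiv ℝ ζ y‖ ≤ max M1 0 := by
      rw [norm_fderiv_eq_iteratedFDeriv]
      exact (hM1 1 le_rfl y).trans (le_max_left _ _)
    calc ‖ContinuousLinearMap.id ℝ (Rd d)‖ + ‖fderiv ℝ ζ y‖ ≤ 1 + max M1 0 := by linarith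
      _ = a := ha.symm
  have hdet1 : lam ≤ |((Tmap y (hdet_ne hlam hdet y) : Rd d →L[ℝ] Rd d)).det| := by
    rw [Tmap_coe]
    have := hdet 1 (by norm_num) y
    rwa [one_smul] at this
  have hent : ∀ i j, |(Tmap y (hdet_ne hlam hdet y) : Rd d →L[ℝ] Rd d) (bas d j) i| ≤ a := by
    intro i j
    refine (abs_coord_le_norm _ i).trans ?_
    refine (ContinuousLinearMap.unit_le_opNorm _ _ ?_).trans hTnorm
    have : ‖bas d j‖ = 1 := by
      simp [bas, EuclideanSpace.basisFun_apply, EuclideanSpace.norm_single]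
    rw [this]
  have := symm_norm_le (T := Tmap y (hdet_ne hlam hdet y)) ha0 hlam hdet1 hent
  calc ‖((Tmap y (hdet_ne hlam hdet y)).symm : Rd d →L[ℝ] Rd d)‖
      ≤ (d:ℝ)^2 * (lam⁻¹ * (d.factorial:ℝ) * max a 1 ^ d) := this
    _ = B0 d lam M1 := by rw [B0, ha]
section keysec

variable {d : ℕ}

lemma key (d m : ℕ) (hm : 1 ≤ m) (lam M1 Mm : ℝ) (hlam : 0 < lam) :
    ∀ k : ℕ, ∃ K : ℝ, 0 ≤ K ∧
      ∀ ζ ι : Rd d → Rd d, ContDiff ℝ (m : ℕ∞) ζ →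
        (∀ θ ∈ Set.Icc (0:ℝ) 1, ∀ x : Rd d,
          lam ≤ |(ContinuousLinearMap.id ℝ (Rd d) + θ • fderiv ℝ ζ x).det|) →
        (∀ k' ≤ 1, ∀ x : Rd d, ‖iteratedFDeriv ℝ k' ζ x‖ ≤ M1) →
        (∀ k' ≤ m, ∀ x : Rd d, ‖iteratedFDeriv ℝ k' ζ x‖ ≤ Mm) →
        Function.LeftInverse ι (fun x => x + ζ x) →
        Function.RightInverse ι (fun x => x + ζ x) →
        1 ≤ k → k ≤ m → ∀ C : ℝ,
          (∀ j, 1 ≤ j → j ≤ k → ∀ x : Rd d, ‖iteratedFDeriv ℝ j ζ x‖ ≤ C) →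
          ∀ x : Rd d, ‖iteratedFDeriv ℝ k (fun y : Rd d => ι y - y) x‖ ≤ K * C := by
  intro k
  induction k using Nat.strong_induction_on with
  | _ k IH =>
  match k, IH with
  | 0, _ =>
    exact ⟨0, le_rfl, fun ζ ι _ _ _ _ _ _ h10 => absurd h10 (by norm_num)⟩
  | 1, _ =>
    refine ⟨B0 d lam M1, B0_nonneg hlam, ?_⟩
    intro ζ ι hζ hdet hM1 hMm hleft hright _ _ C hC x
    obtain ⟨hcd, hfd⟩ := iota_smooth hm hζ (hdet_ne hlam hdet) hleft hright x
    set S : Rd d →L[ℝ] Rd d :=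
      ((Tmap (ι x) (hdet_ne hlam hdet (ι x))).symm : Rd d →L[ℝ] Rd d) with hS
    have hSB : ‖S‖ ≤ B0 d lam M1 := symm_norm_le_B0 hm hlam hζ hdet hM1 (ι x)
    have hfz : HasFDerivAt (fun y : Rd d => ι y - y) (S - ContinuousLinearMap.id ℝ (Rd d)) x :=
      hfd.sub (hasFDerivAt_id x)
    have hCf : ‖fderiv ℝ ζ (ι x)‖ ≤ C := by
      rw [norm_fderiv_eq_iteratedFDeriv]
      exact hC 1 le_rfl le_rfl (ι x)
    have hC0 : 0 ≤ C := le_trans (norm_nonneg _) hCf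
    rw [← norm_fderiv_eq_iteratedFDeriv, hfz.fderiv]
    refine ContinuousLinearMap.opNorm_le_bound _ (mul_nonneg (B0_nonneg hlam) hC0) fun v => ?_
    have hTv : (Tmap (ι x) (hdet_ne hlam hdet (ι x))) (S v) = v :=
      (Tmap (ι x) (hdet_ne hlam hdet (ι x))).apply_symm_apply v
    have hTv' : S v + fderiv ℝ ζ (ι x) (S v) = v := by
      have := hTv
      rw [show ((Tmap (ι x) (hdet_ne hlam hdet (ι x))) (S v)) =
        (Tmap (ι x) (hdet_ne hlam hdet (ι x)) : Rd d →L[ℝ] Rd d) (S v) from rfl,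
        Tmap_coe] at this
      simpa using this
    have heq : (S - ContinuousLinearMap.id ℝ (Rd d)) v = -(fderiv ℝ ζ (ι x) (S v)) := by
      simp only [ContinuousLinearMap.sub_apply, ContinuousLinearMap.id_apply]
      linear_combination (norm := abel) hTv'
    rw [heq, norm_neg]
    calc ‖fderiv ℝ ζ (ι x) (S v)‖ ≤ ‖fderiv ℝ ζ (ι x)‖ * ‖S v‖ :=
          ContinuousLinearMap.le_opNorm _ _
      _ ≤ C * (B0 d lam M1 * ‖v‖) := by
          refine mul_le_mul hCf ?_ (norm_nonneg _) hC0
          calc ‖S v‖ ≤ ‖S‖ * ‖v‖ := S.le_opNorm v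
            _ ≤ B0 d lam M1 * ‖v‖ := by
                exact mul_le_mul_of_nonneg_right hSB (norm_nonneg _)
      _ = B0 d lam M1 * C * ‖v‖ := by ring
  | (n+2), IH =>
    set k := n + 2 with hkdef
    have hk2 : 2 ≤ k := by omega
    have hks : 0 < k := by omega
    choose K hK0 hKP using IH
    set A : ℝ := 1 + B0 d lam M1 + ∑ j ∈ (Finset.range k).attach,
      K j (Finset.mem_range.mp j.2) * max Mm 0 with hA
    have hsumnn : 0 ≤ ∑ j ∈ (Finset.range k).attach,
        K j (Finset.mem_range.mp j.2) * max Mm 0 :=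
      Finset.sum_nonneg fun j _ => mul_nonneg (hK0 _ _) (le_max_right _ _)
    have hA1 : 1 ≤ A := by
      have := B0_nonneg (d := d) (M1 := M1) hlam
      rw [hA]; linarith
    have hA0 : 0 ≤ A := by linarith
    refine ⟨B0 d lam M1 * ((Fintype.card (OrderedFinpartition k) : ℝ) * A ^ k),
      mul_nonneg (B0_nonneg hlam) (by positivity), ?_⟩
    intro ζ ι hζ hdet hM1 hMm hleft hright hk1 hkm C hC x
    classical
    have hC0 : 0 ≤ C := le_trans (norm_nonneg _) (hC 1 (by omega) (by omega) x)
    set zs : Rd d → Rd d := fun y => ι y - y with hzsdef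
    have hι : ContDiff ℝ (m : ℕ∞) ι :=
      contDiff_iff_contDiffAt.2 fun y =>
        (iota_smooth hm hζ (hdet_ne hlam hdet) hleft hright y).1
    have hzs : ContDiff ℝ (m : ℕ∞) zs := hι.sub contDiff_id
    have hη : ContDiff ℝ (m : ℕ∞) (fun y : Rd d => -ζ y) := hζ.neg
    have hcompeq : zs = (fun y : Rd d => -ζ y) ∘ ι := by
      funext y
      have h := hright y
      simp only [hzsdef, Function.comp_apply]
      have h' : ι y + ζ (ι y) = y := h
      have h2 : ι y - y = ι y - (ι y + ζ (ι y)) := by rw [h']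
      rw [h2]; abel
    -- iterated derivatives of ι agree with those of zs in degree ≥ 2
    have Djι : ∀ j : ℕ, 2 ≤ j → (j : ℕ∞) ≤ (m : ℕ∞) → ∀ x' : Rd d,
        iteratedFDeriv ℝ j ι x' = iteratedFDeriv ℝ j zs x' := by
      intro j hj hjm x'
      have hie : ι = fun y => zs y + y := by
        funext y; simp [hzsdef]
      rw [hie]
      have h1 : ContDiff ℝ (j : ℕ∞) zs := hzs.of_le (by exact_mod_cast hjm)
      have h2 : ContDiff ℝ (j : ℕ∞) (fun y : Rd d => y) := contDiff_id
      rw [iteratedFDeriv_add_apply' h1.contDiffAt h2.contDiffAt, iteratedFDeriv_id_zero hj, add_zero]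
    -- the Faa di Bruno expansion
    set q := ftaylorSeries ℝ (fun y : Rd d => -ζ y) (ι x) with hq
    set p := ftaylorSeries ℝ ι x with hp
    have hsum : iteratedFDeriv ℝ k zs x =
        ∑ c : OrderedFinpartition k, q.compAlongOrderedFinpartition p c := by
      rw [hcompeq]
      exact iteratedFDeriv_comp_sum hη hι (by exact_mod_cast hkm) x
    set sing := OrderedFinpartition.single k hks with hsing
    set Rest := ∑ c ∈ Finset.univ.erase sing, q.compAlongOrderedFinpartition p c with hRest
    have hsplit : iteratedFDeriv ℝ k zs x = q.compAlongOrderedFinpartition p sing + Rest := by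
      rw [hsum, hRest, Finset.add_sum_erase _ _ (Finset.mem_univ sing)]
    -- value of the single-block term
    have hTopv : ∀ v : Fin k → Rd d, q.compAlongOrderedFinpartition p sing v =
        -(fderiv ℝ ζ (ι x) (iteratedFDeriv ℝ k zs x v)) := by
      intro v
      have h1 : q.compAlongOrderedFinpartition p sing v =
          q 1 (fun _ : Fin 1 => p k (v ∘ id)) := rfl
      rw [h1]
      have h2 : q 1 (fun _ : Fin 1 => p k (v ∘ id)) =
          fderiv ℝ (fun y : Rd d => -ζ y) (ι x) (p k (v ∘ id)) := by
        exact iteratedFDeriv_one_apply _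
      rw [h2, fderiv_fun_neg]
      have h3 : p k (v ∘ id) = iteratedFDeriv ℝ k zs x v := by
        have : p k = iteratedFDeriv ℝ k ι x := rfl
        rw [this, Djι k hk2 (by exact_mod_cast hkm) x]
        simp
      rw [h3]
      simp
    -- main identity: T (D^k zs v) = Rest v
    have hmainv : ∀ v : Fin k → Rd d,
        (Tmap (ι x) (hdet_ne hlam hdet (ι x))) (iteratedFDeriv ℝ k zs x v) = Rest v := by
      intro v
      have h1 : iteratedFDeriv ℝ k zs x v =
          q.compAlongOrderedFinpartition p sing v + Rest v := by
        rw [hsplit]; rfl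
      have h2 := hTopv v
      rw [show ((Tmap (ι x) (hdet_ne hlam hdet (ι x))) (iteratedFDeriv ℝ k zs x v)) =
        (Tmap (ι x) (hdet_ne hlam hdet (ι x)) : Rd d →L[ℝ] Rd d)
          (iteratedFDeriv ℝ k zs x v) from rfl, Tmap_coe]
      simp only [ContinuousLinearMap.add_apply, ContinuousLinearMap.id_apply]
      rw [h2] at h1
      nth_rewrite 1 [h1]
      abel
    -- bounds on the blocks
    have hpA : ∀ c : OrderedFinpartition k, c ≠ sing → ∀ i : Fin c.length,
        ‖p (c.partSize i)‖ ≤ A := by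
      intro c hcne i
      have h1j : 1 ≤ c.partSize i := c.partSize_pos i
      have hjk : c.partSize i < k := by
        rcases Nat.lt_or_ge (c.partSize i) k with h | h
        · exact h
        · have : c.partSize i = k := le_antisymm (c.partSize_le i) h
          exact absurd (c.eq_single_of_partSize_eq hks this) hcne
      rcases Nat.lt_or_ge (c.partSize i) 2 with h2 | h2
      · -- partSize = 1
        have hj1 : c.partSize i = 1 := by omega
        rw [hp, hj1]
        have : ‖iteratedFDeriv ℝ 1 ι x‖ = ‖fderiv ℝ ι x‖ :=
          (norm_fderiv_eq_iteratedFDeriv ι x).symm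
        show ‖ftaylorSeries ℝ ι x 1‖ ≤ A
        have hft : ftaylorSeries ℝ ι x 1 = iteratedFDeriv ℝ 1 ι x := rfl
        rw [hft, ← norm_fderiv_eq_iteratedFDeriv,
          (iota_smooth hm hζ (hdet_ne hlam hdet) hleft hright x).2.fderiv]
        have := symm_norm_le_B0 hm hlam hζ hdet hM1 (ι x)
        rw [hA]; linarith
      · -- partSize ≥ 2
        have hjm : c.partSize i ≤ m := le_trans (le_of_lt hjk) hkm
        have hb := hKP (c.partSize i) hjk ζ ι hζ hdet hM1 hMm hleft hright
          (by omega) hjm Mm (fun j' h1 h2 x' => hMm j' (le_trans h2 hjm) x') x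
        have hft : p (c.partSize i) = iteratedFDeriv ℝ (c.partSize i) ι x := rfl
        rw [hft, Djι (c.partSize i) h2 (by exact_mod_cast hjm) x]
        calc ‖iteratedFDeriv ℝ (c.partSize i) zs x‖ ≤ K (c.partSize i) hjk * Mm := hb
          _ ≤ K (c.partSize i) hjk * max Mm 0 :=
              mul_le_mul_of_nonneg_left (le_max_left _ _) (hK0 _ _)
          _ ≤ A := by
              rw [hA]
              have hmem : (⟨c.partSize i, Finset.mem_range.mpr hjk⟩ :
                  {x // x ∈ Finset.range k}) ∈ (Finset.range k).attach :=
                Finset.mem_attach _ _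
              have hle := Finset.single_le_sum
                (f := fun j : {x // x ∈ Finset.range k} =>
                  K j (Finset.mem_range.mp j.2) * max Mm 0)
                (fun j _ => mul_nonneg (hK0 _ _) (le_max_right _ _)) hmem
              have hle' : K (c.partSize i) hjk * max Mm 0 ≤
                  ∑ j ∈ (Finset.range k).attach, K j (Finset.mem_range.mp j.2) * max Mm 0 := by
                simpa using hle
              have := B0_nonneg (d := d) (M1 := M1) hlam
              linarith
    -- bound on each term of Rest
    have hterm : ∀ c : OrderedFinpartition k, c ≠ sing →
        ‖q.compAlongOrderedFinpartition p c‖ ≤ C * A ^ k := by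
      intro c hcne
      have hqn : ‖q c.length‖ ≤ C := by
        have h1 : q c.length = iteratedFDeriv ℝ c.length (fun y : Rd d => -ζ y) (ι x) := rfl
        have h2 : iteratedFDeriv ℝ c.length (fun y : Rd d => -ζ y) (ι x) =
            -iteratedFDeriv ℝ c.length ζ (ι x) := iteratedFDeriv_neg_apply
        rw [h1, h2, norm_neg]
        exact hC c.length (c.length_pos hks) c.length_le (ι x)
      calc ‖q.compAlongOrderedFinpartition p c‖
          ≤ ‖q c.length‖ * ∏ i, ‖p (c.partSize i)‖ := norm_compAlong_le c _ _
        _ ≤ C * A ^ k := by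
            refine mul_le_mul hqn ?_ (Finset.prod_nonneg fun i _ => norm_nonneg _) hC0
            calc ∏ i, ‖p (c.partSize i)‖ ≤ ∏ _i : Fin c.length, A :=
                  Finset.prod_le_prod (fun i _ => norm_nonneg _) (fun i _ => hpA c hcne i)
              _ = A ^ c.length := by simp
              _ ≤ A ^ k := pow_le_pow_right₀ hA1 c.length_le
    -- bound on Rest
    have hRestn : ‖Rest‖ ≤ (Fintype.card (OrderedFinpartition k) : ℝ) * (C * A ^ k) := by
      rw [hRest]
      refine (norm_sum_le _ _).trans ?_
      calc ∑ c ∈ Finset.univ.erase sing, ‖q.compAlongOrderedFinpartition p c‖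
          ≤ ∑ _c ∈ Finset.univ.erase sing, C * A ^ k :=
            Finset.sum_le_sum fun c hc => hterm c (Finset.ne_of_mem_erase hc)
        _ = ((Finset.univ.erase sing).card : ℝ) * (C * A ^ k) := by
            rw [Finset.sum_const, nsmul_eq_mul]
        _ ≤ (Fintype.card (OrderedFinpartition k) : ℝ) * (C * A ^ k) := by
            refine mul_le_mul_of_nonneg_right ?_ (by positivity)
            exact_mod_cast Nat.cast_le.mpr
              ((Finset.card_erase_le).trans (le_of_eq (Finset.card_univ)))
    -- conclude
    have hSB := symm_norm_le_B0 hm hlam hζ hdet hM1 (ι x)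
    refine ContinuousMultilinearMap.opNorm_le_bound
      (mul_nonneg (mul_nonneg (B0_nonneg hlam) (by positivity)) hC0) fun v => ?_
    have h1 : iteratedFDeriv ℝ k zs x v =
        ((Tmap (ι x) (hdet_ne hlam hdet (ι x))).symm : Rd d →L[ℝ] Rd d) (Rest v) := by
      rw [← hmainv v]
      exact ((Tmap (ι x) (hdet_ne hlam hdet (ι x))).symm_apply_apply _).symm
    calc ‖iteratedFDeriv ℝ k zs x v‖
        = ‖((Tmap (ι x) (hdet_ne hlam hdet (ι x))).symm : Rd d →L[ℝ] Rd d) (Rest v)‖ := by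
          rw [h1]
      _ ≤ B0 d lam M1 * ‖Rest v‖ := by
          refine (ContinuousLinearMap.le_opNorm _ _).trans ?_
          exact mul_le_mul_of_nonneg_right hSB (norm_nonneg _)
      _ ≤ B0 d lam M1 * (‖Rest‖ * ∏ i, ‖v i‖) := by
          refine mul_le_mul_of_nonneg_left (Rest.le_opNorm v) (B0_nonneg hlam)
      _ ≤ B0 d lam M1 * (((Fintype.card (OrderedFinpartition k) : ℝ) * (C * A ^ k))
            * ∏ i, ‖v i‖) := by
          refine mul_le_mul_of_nonneg_left ?_ (B0_nonneg hlam)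
          exact mul_le_mul_of_nonneg_right hRestn (Finset.prod_nonneg fun i _ => norm_nonneg _)
      _ = B0 d lam M1 * ((Fintype.card (OrderedFinpartition k) : ℝ) * A ^ k) * C
            * ∏ i, ‖v i‖ := by ring

end keysec


/-- let `ζ : ℝ^d → ℝ^d` be `C^m` (`m ≥ 1`) with
`λ ≤ |det(I + θDζ)|` for `θ ∈ [0,1]` and `sup_x ‖D^kζ(x)‖ ≤ M_1` for `k ≤ 1`,
`≤ M_m` for `k ≤ m`, and let `τ(x) = x + ζ(x)` (a `C^m`-diffeomorphism, with
inverse `ι`).  Then `ζ*(x) = −x + τ^{-1}(x)` is `C^m`,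
`sup|ζ*| = sup|ζ|`, `sup|D^k ζ*| ≤ M*_m max_{1≤j≤k} sup|D^j ζ|` for `1 ≤ k ≤ m`
with `M*_m = M*_m(d,λ,M_m)`, and
`inf_{θ∈[0,1]} inf_x |det(I + θDζ*)| ≥ λ' inf_{θ∈[0,1]} inf_x |det(I + θDζ)|`
with `λ' = λ'(d,λ,M_1) > 0`. -/
theorem statement2 (d m : ℕ) (hm : 1 ≤ m) (lam M1 : ℝ) (hlam : 0 < lam) :
    ∃ lam' : ℝ, 0 < lam' ∧ ∀ Mm : ℝ, ∃ Mstar : ℝ,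
      ∀ ζ ι : Rd d → Rd d, ContDiff ℝ (m : ℕ∞) ζ →
        (∀ θ ∈ Set.Icc (0 : ℝ) 1, ∀ x : Rd d,
          lam ≤ |(ContinuousLinearMap.id ℝ (Rd d) + θ • fderiv ℝ ζ x).det|) →
        (∀ k ≤ 1, ∀ x : Rd d, ‖iteratedFDeriv ℝ k ζ x‖ ≤ M1) →
        (∀ k ≤ m, ∀ x : Rd d, ‖iteratedFDeriv ℝ k ζ x‖ ≤ Mm) →
        Function.LeftInverse ι (fun x => x + ζ x) →
        Function.RightInverse ι (fun x => x + ζ x) →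
        -- `ζ* = −x + τ^{-1}(x)`
        (ContDiff ℝ (m : ℕ∞) (fun x : Rd d => ι x - x)) ∧
        ((⨆ x : Rd d, ‖ι x - x‖) = ⨆ x : Rd d, ‖ζ x‖) ∧
        (∀ k, 1 ≤ k → k ≤ m → ∀ C : ℝ,
          (∀ j, 1 ≤ j → j ≤ k → ∀ x : Rd d, ‖iteratedFDeriv ℝ j ζ x‖ ≤ C) →
          ∀ x : Rd d, ‖iteratedFDeriv ℝ k (fun y : Rd d => ι y - y) x‖ ≤ Mstar * C) ∧
        (∀ c : ℝ,
          (∀ θ ∈ Set.Icc (0 : ℝ) 1, ∀ x : Rd d,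
            c ≤ |(ContinuousLinearMap.id ℝ (Rd d) + θ • fderiv ℝ ζ x).det|) →
          ∀ θ ∈ Set.Icc (0 : ℝ) 1, ∀ x : Rd d,
            lam' * c ≤
              |(ContinuousLinearMap.id ℝ (Rd d)
                  + θ • fderiv ℝ (fun y : Rd d => ι y - y) x).det|) := by

  set D0 : ℝ := (d.factorial : ℝ) * (1 + max M1 0) ^ d with hD0
  have hD0pos : 0 < D0 := by
    rw [hD0]; positivity
  refine ⟨D0⁻¹, by positivity, fun Mm => ?_⟩
  choose Kf hKf0 hKfP using key d m hm lam M1 Mm hlam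
  refine ⟨∑ k ∈ Finset.range (m+1), Kf k, ?_⟩
  intro ζ ι hζ hdet hM1 hMm hleft hright
  have hdx := hdet_ne hlam hdet
  have hι : ContDiff ℝ (m : ℕ∞) ι :=
    contDiff_iff_contDiffAt.2 fun y => (iota_smooth hm hζ hdx hleft hright y).1
  refine ⟨hι.sub contDiff_id, ?_, ?_, ?_⟩
  · -- sup equality
    have hptw : ∀ x : Rd d, ‖ι x - x‖ = ‖ζ (ι x)‖ := by
      intro x
      have h' : ι x + ζ (ι x) = x := hright x
      have h2 : ι x - x = -(ζ (ι x)) := by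
        have h3 : ι x - x = ι x - (ι x + ζ (ι x)) := by rw [h']
        rw [h3]; abel
      rw [h2, norm_neg]
    have hsurj : Function.Surjective ι := fun y => ⟨y + ζ y, hleft y⟩
    calc ⨆ x : Rd d, ‖ι x - x‖ = ⨆ x : Rd d, ‖ζ (ι x)‖ := by
          exact iSup_congr hptw
      _ = ⨆ y : Rd d, ‖ζ y‖ := hsurj.iSup_comp (fun y => ‖ζ y‖)
  · -- derivative bounds
    intro k hk1 hkm C hC x
    have hC0 : 0 ≤ C := le_trans (norm_nonneg _) (hC 1 le_rfl hk1 x)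
    have hb := hKfP k ζ ι hζ hdet hM1 hMm hleft hright hk1 hkm C hC x
    refine hb.trans (mul_le_mul_of_nonneg_right ?_ hC0)
    exact Finset.single_le_sum (f := fun k => Kf k) (fun i _ => hKf0 i)
      (Finset.mem_range.mpr (by omega))
  · -- determinant bound
    intro c hc θ hθ x
    set a := ι x with hadef
    set T := Tmap a (hdx a) with hT
    set S : Rd d →L[ℝ] Rd d := (T.symm : Rd d →L[ℝ] Rd d) with hSdef
    have hfz : HasFDerivAt (fun y : Rd d => ι y - y)
        (S - ContinuousLinearMap.id ℝ (Rd d)) x :=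
      (iota_smooth hm hζ hdx hleft hright x).2.sub (hasFDerivAt_id x)
    rw [hfz.fderiv]
    have hSv : ∀ v : Rd d, fderiv ℝ ζ a (S v) = v - S v := by
      intro v
      have hTv : T (S v) = v := T.apply_symm_apply v
      rw [show (T (S v)) = (T : Rd d →L[ℝ] Rd d) (S v) from rfl, hT, Tmap_coe] at hTv
      simp only [ContinuousLinearMap.add_apply, ContinuousLinearMap.id_apply] at hTv
      exact eq_sub_of_add_eq' hTv
    -- key algebraic identity
    have E1 : (ContinuousLinearMap.id ℝ (Rd d) + fderiv ℝ ζ a).comp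
        (ContinuousLinearMap.id ℝ (Rd d)
          + θ • (S - ContinuousLinearMap.id ℝ (Rd d)))
        = ContinuousLinearMap.id ℝ (Rd d) + (1 - θ) • fderiv ℝ ζ a := by
      refine ContinuousLinearMap.ext fun v => ?_
      simp only [ContinuousLinearMap.comp_apply, ContinuousLinearMap.add_apply,
        ContinuousLinearMap.smul_apply, ContinuousLinearMap.sub_apply,
        ContinuousLinearMap.id_apply, map_add, _root_.map_smul, map_sub, hSv v]
      module
    -- determinants
    have hdet_mul : (ContinuousLinearMap.id ℝ (Rd d) + fderiv ℝ ζ a).det *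
        (ContinuousLinearMap.id ℝ (Rd d)
          + θ • (S - ContinuousLinearMap.id ℝ (Rd d))).det
        = (ContinuousLinearMap.id ℝ (Rd d) + (1 - θ) • fderiv ℝ ζ a).det := by
      rw [← E1]
      show LinearMap.det _ * LinearMap.det _ = LinearMap.det _
      rw [ContinuousLinearMap.toLinearMap_comp, LinearMap.det_comp]
    have hDT_le : |(ContinuousLinearMap.id ℝ (Rd d) + fderiv ℝ ζ a).det| ≤ D0 := by
      refine (abs_det_le_of_entries (a := 1 + max M1 0) ?_).trans (le_of_eq hD0.symm)
      intro i j
      refine (abs_coord_le_norm _ i).trans ?_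
      refine (ContinuousLinearMap.unit_le_opNorm _ _ ?_).trans ?_
      · have : ‖bas d j‖ = 1 := by
          simp [bas, EuclideanSpace.basisFun_apply, EuclideanSpace.norm_single]
        rw [this]
      · refine (norm_add_le _ _).trans ?_
        have h1 : ‖ContinuousLinearMap.id ℝ (Rd d)‖ ≤ 1 := ContinuousLinearMap.norm_id_le
        have h2 : ‖fderiv ℝ ζ a‖ ≤ max M1 0 := by
          rw [norm_fderiv_eq_iteratedFDeriv]
          exact (hM1 1 le_rfl a).trans (le_max_left _ _)
        linarith
    have hDT_pos : lam ≤ |(ContinuousLinearMap.id ℝ (Rd d) + fderiv ℝ ζ a).det| := by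
      have := hdet 1 (by norm_num) a
      rwa [one_smul] at this
    have hD2 : c ≤ |(ContinuousLinearMap.id ℝ (Rd d) + (1 - θ) • fderiv ℝ ζ a).det| :=
      hc (1 - θ) ⟨by linarith [hθ.2], by linarith [hθ.1]⟩ a
    rcases le_or_gt c 0 with hc0 | hc0
    · have : D0⁻¹ * c ≤ 0 := mul_nonpos_of_nonneg_of_nonpos (by positivity) hc0
      exact this.trans (abs_nonneg _)
    · -- positive c
      set D1 := (ContinuousLinearMap.id ℝ (Rd d)
        + θ • (S - ContinuousLinearMap.id ℝ (Rd d))).det with hD1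
      have habs : |(ContinuousLinearMap.id ℝ (Rd d) + fderiv ℝ ζ a).det| * |D1|
          = |(ContinuousLinearMap.id ℝ (Rd d) + (1 - θ) • fderiv ℝ ζ a).det| := by
        rw [← abs_mul, hdet_mul]
      have h1 : c ≤ D0 * |D1| := by
        calc c ≤ |(ContinuousLinearMap.id ℝ (Rd d) + (1 - θ) • fderiv ℝ ζ a).det| := hD2
          _ = |(ContinuousLinearMap.id ℝ (Rd d) + fderiv ℝ ζ a).det| * |D1| := habs.symm
          _ ≤ D0 * |D1| := mul_le_mul_of_nonneg_right hDT_le (abs_nonneg _)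
      calc D0⁻¹ * c ≤ D0⁻¹ * (D0 * |D1|) :=
            mul_le_mul_of_nonneg_left h1 (by positivity)
        _ = |D1| := by field_simp

end
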